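/- Let u₀ < u₁ be real numbers, C a real constant, and ψ : ℝ → ℝ a twice continuously differentiable function with ψ(u) > 0 for all u in [u₀, u₁], satisfying ψ''(u) = 1/ψ(u) - C for all u in [u₀, u₁], together with the endpoint conditions ψ'(u₀) = 0, ψ'(u₁) = 0, and ψ''(u₀) = -ψ''(u₁). Then ψ(u₀) = ψ(u₁). -/

import Mathlib

theorem endpoint_values_eq (u₀ u₁ C : ℝ) (hu : u₀ < u₁) (ψ : ℝ → ℝ)
    (hψ : ContDiff ℝ 2 ψ)
    (hpos : ∀ u ∈ Set.Icc u₀ u₁, 0 < ψ u)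
    (hode : ∀ u ∈ Set.Icc u₀ u₁, deriv (deriv ψ) u = 1 / ψ u - C)
    (h0 : deriv ψ u₀ = 0) (h1 : deriv ψ u₁ = 0)
    (h2 : deriv (deriv ψ) u₀ = -deriv (deriv ψ) u₁) :
    ψ u₀ = ψ u₁ := by
  -- differentiability facts
  have hψ' : ContDiff ℝ 1 (deriv ψ) := by
    have := (contDiff_succ_iff_deriv (n := 1)).mp (by norm_num at hψ ⊢; exact hψ)
    exact this.2.2
  have hdψ : Differentiable ℝ ψ := hψ.differentiable (by norm_num)
  have hdψ' : Differentiable ℝ (deriv ψ) := hψ'.differentiable (by norm_num)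
  set E : ℝ → ℝ := fun u => (deriv ψ u) ^ 2 / 2 - Real.log (ψ u) + C * ψ u with hE
  have hmeme : u₀ ∈ Set.Icc u₀ u₁ := ⟨le_rfl, hu.le⟩
  have hmeme1 : u₁ ∈ Set.Icc u₀ u₁ := ⟨hu.le, le_rfl⟩
  have ha : 0 < ψ u₀ := hpos _ hmeme
  have hb : 0 < ψ u₁ := hpos _ hmeme1
  -- E has derivative 0 on Icc
  have hEderiv : ∀ x ∈ Set.Icc u₀ u₁, HasDerivAt E 0 x := by
    intro x hx
    have hne : ψ x ≠ 0 := (hpos x hx).ne'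
    have h1' : HasDerivAt (fun u => (deriv ψ u) ^ 2 / 2)
        ((2 : ℕ) * (deriv ψ x) ^ 1 * deriv (deriv ψ) x / 2) x :=
      ((hdψ' x).hasDerivAt.pow 2).div_const 2
    have h2' : HasDerivAt (fun u => Real.log (ψ u)) ((ψ x)⁻¹ * deriv ψ x) x :=
      (Real.hasDerivAt_log hne).comp x (hdψ x).hasDerivAt
    have h3' : HasDerivAt (fun u => C * ψ u) (C * deriv ψ x) x :=
      ((hdψ x).hasDerivAt).const_mul C
    have := (h1'.sub h2').add h3'
    have hval : (2 : ℕ) * (deriv ψ x) ^ 1 * deriv (deriv ψ) x / 2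
        - (ψ x)⁻¹ * deriv ψ x + C * deriv ψ x = 0 := by
      rw [hode x hx]
      field_simp
      ring
    rw [hval] at this
    exact this
  have hEconst : E u₁ = E u₀ := by
    have hcont : ContinuousOn E (Set.Icc u₀ u₁) := fun x hx =>
      (hEderiv x hx).continuousAt.continuousWithinAt
    have := constant_of_has_deriv_right_zero hcont
      (fun x hx => (hEderiv x (Set.Ico_subset_Icc_self hx)).hasDerivWithinAt)
    exact this u₁ hmeme1
  -- endpoint values
  have hlog : Real.log (ψ u₀) - Real.log (ψ u₁) = C * (ψ u₀ - ψ u₁) := by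
    simp only [hE, h0, h1] at hEconst
    nlinarith [hEconst]
  have hC : 1 / ψ u₀ + 1 / ψ u₁ = 2 * C := by
    have e0 := hode u₀ hmeme
    have e1 := hode u₁ hmeme1
    rw [e0, e1] at h2
    linarith
  set y : ℝ := Real.log (ψ u₀) - Real.log (ψ u₁) with hy
  have hsinh : Real.sinh y = y := by
    have : y = Real.log (ψ u₀ / ψ u₁) := by
      rw [hy, Real.log_div ha.ne' hb.ne']
    rw [this, Real.sinh_log (by positivity)]
    rw [← this, hlog]
    have h1a := ha.ne'
    have h1b := hb.ne'
    have hC' : ψ u₁ + ψ u₀ = 2 * C * (ψ u₀ * ψ u₁) := by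
      field_simp at hC
      linarith
    field_simp
    nlinarith [hC', mul_pos ha hb]
  have hy0 : y = 0 := by
    rcases lt_trichotomy y 0 with h | h | h
    · have : -y < Real.sinh (-y) := Real.self_lt_sinh_iff.mpr (by linarith)
      rw [Real.sinh_neg, hsinh] at this
      linarith
    · exact h
    · have := Real.self_lt_sinh_iff.mpr h
      rw [hsinh] at this
      linarith
  have : Real.log (ψ u₀) = Real.log (ψ u₁) := by linarith [hy0]
  calc ψ u₀ = Real.exp (Real.log (ψ u₀)) := (Real.exp_log ha).symm
    _ = Real.exp (Real.log (ψ u₁)) := by rw [this]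
    _ = ψ u₁ := Real.exp_log hb
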